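/- (Consequence of Higman's Lemma) Let A be a finite type and L ⊆ List A a set of finite words that is closed under taking subwords (i.e. if w ∈ L and u is a sublist of w then u ∈ L). Then there exists a finite set of words w_1, …, w_N such that for all w: w ∉ L if and only if some w_i is a sublist of w. -/

import Mathlib

theorem list_univ_pwo (A : Type*) [Finite A] :
    (Set.univ : Set (List A)).PartiallyWellOrderedOn List.Sublist := by
  have h := Set.PartiallyWellOrderedOn.partiallyWellOrderedOn_sublistForall₂ (Eq : A → A → Prop)
    (Set.Finite.partiallyWellOrderedOn (Set.finite_univ))
  have heq : { l : List A | ∀ x, x ∈ l → x ∈ (Set.univ : Set A) } = Set.univ := by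
    ext l; simp
  rw [heq] at h
  intro f
  obtain ⟨m, n, hmn, hr⟩ := h f
  refine ⟨m, n, hmn, ?_⟩
  change List.SublistForall₂ Eq (f m).1 (f n).1 at hr
  rw [List.sublistForall₂_iff] at hr
  obtain ⟨l, h1, h2⟩ := hr
  rw [List.forall₂_eq_eq_eq] at h1
  subst h1
  exact h2

/-- Consequence of Higman's Lemma: a subword-closed language of finite words
over a finite alphabet is characterised by finitely many forbidden subwords. -/
theorem subword_closed_finitely_many_obstructions (A : Type*) [Finite A]
    (L : Set (List A))
    (hclosed : ∀ w ∈ L, ∀ u : List A, u.Sublist w → u ∈ L) :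
    ∃ S : Finset (List A), ∀ w : List A, w ∉ L ↔ ∃ v ∈ S, v.Sublist w := by
  classical
  set M : Set (List A) := {w | w ∉ L ∧ ∀ u : List A, u ∉ L → u.Sublist w → u = w} with hM
  have hMfin : M.Finite := by
    rw [← Set.not_infinite]
    intro hi
    set f := hi.natEmbedding
    obtain ⟨m, n, hmn, hsub⟩ := list_univ_pwo A (fun k => ⟨(f k).1, Set.mem_univ _⟩)
    have heq : ((f m).1 : List A) = (f n).1 := (f n).2.2 _ (f m).2.1 hsub
    exact hmn.ne (f.injective (Subtype.ext heq))
  -- every w ∉ L has an element of M below it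
  have hmin : ∀ n : ℕ, ∀ w : List A, w.length ≤ n → w ∉ L → ∃ v ∈ M, v.Sublist w := by
    intro n
    induction n with
    | zero =>
      intro w hlen hw
      refine ⟨w, ⟨hw, fun u hu husub => husub.eq_of_length ?_⟩, List.Sublist.refl w⟩
      have := husub.length_le
      omega
    | succ n ih =>
      intro w hlen hw
      by_cases hm : ∀ u : List A, u ∉ L → u.Sublist w → u = w
      · exact ⟨w, ⟨hw, hm⟩, List.Sublist.refl w⟩
      · push_neg at hm
        obtain ⟨u, hu, husub, hune⟩ := hm
        have hlt : u.length < w.length :=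
          lt_of_le_of_ne husub.length_le (fun h => hune (husub.eq_of_length h))
        obtain ⟨v, hv, hvsub⟩ := ih u (by omega) hu
        exact ⟨v, hv, hvsub.trans husub⟩
  refine ⟨hMfin.toFinset, fun w => ⟨fun hw => ?_, fun ⟨v, hv, hvsub⟩ hwL => ?_⟩⟩
  · obtain ⟨v, hv, hvsub⟩ := hmin w.length w le_rfl hw
    exact ⟨v, hMfin.mem_toFinset.mpr hv, hvsub⟩
  · exact (hMfin.mem_toFinset.mp hv).1 (hclosed w hwL v hvsub)
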